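/- For each area Δ > 0 and point p = (1,0), every ellipse in ℝ² centered at the origin with area Δ and passing through p is tangent to both lines {y = Δ/π} and {y = −Δ/π}. -/
import Mathlib


/-- Every origin-centered ellipse
`m₁₁x² + 2m₁₂xy + m₂₂y² = 1` (positive definite) with area `Δ` passing
through `(1,0)` is tangent to both horizontal lines `y = ±Δ/π`: it meets each
line at a point where the line is the tangent line of the ellipse (the
gradient of the defining quadratic is vertical there). -/
theorem hooke_ellipses_tangent_to_parallel_lines
    (m₁₁ m₁₂ m₂₂ Δ : ℝ) (hΔ : 0 < Δ)
    (hpos : 0 < m₁₁) (hdet : 0 < m₁₁ * m₂₂ - m₁₂ ^ 2)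
    (harea : Real.pi / Real.sqrt (m₁₁ * m₂₂ - m₁₂ ^ 2) = Δ)
    (hthrough : m₁₁ * 1 ^ 2 + 2 * m₁₂ * 1 * 0 + m₂₂ * 0 ^ 2 = 1) :
    (∃ x₀ : ℝ,
        m₁₁ * x₀ ^ 2 + 2 * m₁₂ * x₀ * (Δ / Real.pi)
          + m₂₂ * (Δ / Real.pi) ^ 2 = 1 ∧
        m₁₁ * x₀ + m₁₂ * (Δ / Real.pi) = 0) ∧
    (∃ x₀ : ℝ,
        m₁₁ * x₀ ^ 2 + 2 * m₁₂ * x₀ * (-(Δ / Real.pi))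
          + m₂₂ * (-(Δ / Real.pi)) ^ 2 = 1 ∧
        m₁₁ * x₀ + m₁₂ * (-(Δ / Real.pi)) = 0) := by
  have hm11 : m₁₁ = 1 := by nlinarith [hthrough]
  have hpi : 0 < Real.pi := Real.pi_pos
  have hs : Real.sqrt (m₁₁ * m₂₂ - m₁₂ ^ 2) = Real.pi / Δ := by
    have h0 : Real.sqrt (m₁₁ * m₂₂ - m₁₂ ^ 2) ≠ 0 := by positivity
    field_simp at harea ⊢
    linarith [harea]
  have hd : m₁₁ * m₂₂ - m₁₂ ^ 2 = (Real.pi / Δ) ^ 2 := by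
    have := Real.sq_sqrt hdet.le
    rw [hs] at this; linarith
  have key : m₂₂ - m₁₂ ^ 2 = Real.pi ^ 2 / Δ ^ 2 := by
    rw [hm11] at hd; rw [div_pow] at hd; linarith
  have hΔπ : (Δ / Real.pi) ^ 2 * (Real.pi ^ 2 / Δ ^ 2) = 1 := by
    field_simp
  constructor
  · refine ⟨-m₁₂ * (Δ / Real.pi), ?_, ?_⟩
    · rw [hm11]; nlinarith [key, hΔπ]
    · rw [hm11]; ring
  · refine ⟨m₁₂ * (Δ / Real.pi), ?_, ?_⟩
    · rw [hm11]; nlinarith [key, hΔπ]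
    · rw [hm11]; ring
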